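/- arXiv:1406.4775 — 2 statements merged into one kernel-verified Lean document; each statement's English description precedes it below -/
import Mathlib

section
/- For every M < ∞ and δ > 0 there exists ε₀ > 0 such that for every ε ∈ (0, ε₀], every probability law μ_V ∈ 𝒫_ε, and every x ∈ [0, M]: |D_V(x) − (1/2 + x²)| ≤ δ, |F_V(x) − x/√(1/2 + x²)| ≤ δ, and |G_V(x) − (1/2)/√(1/2 + x²)| ≤ δ. That is, as ε(V) → 0, uniformly over 𝒫 and over x in compact subsets of [0,∞): D_V(x) → 1/2 + x², F_V(x) → x/√(1/2 + x²), and G_V(x) → (1/2)/√(1/2 + x²). -/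
open MeasureTheory ProbabilityTheory Filter Topology

/-- `D_V(x) = E[((xV+G)⁺)²]` where `V ~ μ` and `G ~ N(0,1)`, independent. -/
noncomputable def Dfun (μ : Measure ℝ) (x : ℝ) : ℝ :=
  ∫ p : ℝ × ℝ, (max (x * p.1 + p.2) 0) ^ 2 ∂(μ.prod (gaussianReal 0 1))

/-- `F_V(x) = E[V(xV+G)⁺]/√(D_V(x))`. -/
noncomputable def Ffun (μ : Measure ℝ) (x : ℝ) : ℝ :=
  (∫ p : ℝ × ℝ, p.1 * max (x * p.1 + p.2) 0 ∂(μ.prod (gaussianReal 0 1))) / Real.sqrt (Dfun μ x)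

/-- `G_V(x) = E[G(xV+G)⁺]/√(D_V(x))`. -/
noncomputable def Gfun (μ : Measure ℝ) (x : ℝ) : ℝ :=
  (∫ p : ℝ × ℝ, p.2 * max (x * p.1 + p.2) 0 ∂(μ.prod (gaussianReal 0 1))) / Real.sqrt (Dfun μ x)

/-- `μ ∈ 𝒫`: a probability measure supported on `[0,∞)` with second moment 1. -/
def lawOK (μ : Measure ℝ) : Prop :=
  IsProbabilityMeasure μ ∧ (∀ᵐ v ∂μ, 0 ≤ v) ∧ ∫ v, v ^ 2 ∂μ = 1

/-- `μ ∈ 𝒫_ε`: in addition `μ({0}) ≥ 1 - ε`. -/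
def lawSparse (μ : Measure ℝ) (ε : ℝ) : Prop :=
  lawOK μ ∧ 1 - ε ≤ (μ {(0 : ℝ)}).toReal

open Real
open scoped NNReal ENNReal

namespace FGDaux

lemma pdf_eq (x : ℝ) : gaussianPDFReal 0 1 x = (Real.sqrt (2*π))⁻¹ * Real.exp (-x^2/2) := by
  simp [gaussianPDFReal]

lemma integral_nu (g : ℝ → ℝ) :
    ∫ x, g x ∂(gaussianReal 0 1) = ∫ x, gaussianPDFReal 0 1 x * g x := by
  rw [gaussianReal_of_var_ne_zero 0 one_ne_zero]
  have h : gaussianPDF 0 1 = fun x => ((Real.toNNReal (gaussianPDFReal 0 1 x) : ℝ≥0) : ℝ≥0∞) := rfl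
  rw [h, integral_withDensity_eq_integral_smul
      ((measurable_gaussianPDFReal 0 1).real_toNNReal)]
  congr 1
  ext x
  rw [NNReal.smul_def, Real.coe_toNNReal _ (gaussianPDFReal_nonneg 0 1 x)]
  rfl

lemma integrable_nu_iff (g : ℝ → ℝ) :
    Integrable g (gaussianReal 0 1) ↔
      Integrable (fun x => gaussianPDFReal 0 1 x * g x) volume := by
  rw [gaussianReal_of_var_ne_zero 0 one_ne_zero]
  have h : gaussianPDF 0 1 = fun x => ((Real.toNNReal (gaussianPDFReal 0 1 x) : ℝ≥0) : ℝ≥0∞) := rfl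
  rw [h, integrable_withDensity_iff_integrable_smul
      ((measurable_gaussianPDFReal 0 1).real_toNNReal)]
  apply integrable_congr
  filter_upwards with x
  rw [NNReal.smul_def, Real.coe_toNNReal _ (gaussianPDFReal_nonneg 0 1 x)]
  rfl

lemma integral_exp_gauss : ∫ x : ℝ, Real.exp (-x^2/2) = Real.sqrt (2*π) := by
  have h := integral_gaussian (1/2)
  have h2 : ∀ x : ℝ, Real.exp (-(1/2:ℝ) * x^2) = Real.exp (-x^2/2) := by
    intro x; ring_nf
  simp_rw [h2] at h
  rw [h]
  rw [show π/(1/2:ℝ) = 2*π by ring]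

lemma integrable_exp_gauss : Integrable (fun x : ℝ => Real.exp (-x^2/2)) := by
  have h := integrable_exp_neg_mul_sq (show (0:ℝ) < 1/2 by norm_num)
  apply h.congr
  filter_upwards with x
  ring_nf

lemma integrable_sq_exp_gauss : Integrable (fun x : ℝ => x^2 * Real.exp (-x^2/2)) := by
  apply Integrable.mono' ((integrable_exp_neg_mul_sq
    (show (0:ℝ) < 1/4 by norm_num)).const_mul 4)
  · exact (continuous_pow 2 |>.mul (by fun_prop)).aestronglyMeasurable
  · filter_upwards with x
    have h1 : x^2 ≤ 4*Real.exp (x^2/4) := by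
      nlinarith [Real.add_one_le_exp (x^2/4), sq_nonneg x]
    have h2 : Real.exp (x^2/4) * Real.exp (-(1/4)*x^2) = 1 := by
      rw [← Real.exp_add]; ring_nf; exact Real.exp_zero
    have h3 : Real.exp (-x^2/2) ≤ Real.exp (x^2/4) * Real.exp (-(1/4)*x^2) * Real.exp (-(1/4)*x^2) := by
      rw [h2, one_mul, Real.exp_le_exp]; nlinarith [sq_nonneg x]
    rw [Real.norm_eq_abs, abs_of_nonneg (by positivity)]
    calc x^2 * Real.exp (-x^2/2) ≤ (4*Real.exp (x^2/4)) * Real.exp (-x^2/2) := by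
          apply mul_le_mul_of_nonneg_right h1 (Real.exp_nonneg _)
      _ = 4 * (Real.exp (x^2/4) * Real.exp (-x^2/2)) := by ring
      _ ≤ 4 * Real.exp (-(1/4)*x^2) := by
          rw [← Real.exp_add]
          apply mul_le_mul_of_nonneg_left _ (by norm_num)
          rw [Real.exp_le_exp]; nlinarith

lemma hasDeriv_gauss (x : ℝ) :
    HasDerivAt (fun y : ℝ => -y * Real.exp (-y^2/2)) ((x^2 - 1) * Real.exp (-x^2/2)) x := by
  have h1 : HasDerivAt (fun y : ℝ => -y^2/2) (-x) x := by
    have := ((hasDerivAt_pow 2 x).neg).div_const 2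
    exact this.congr_deriv (by norm_num; ring)
  have h2 := h1.exp
  have h3 := ((hasDerivAt_id x).neg).mul h2
  exact h3.congr_deriv (by simp; ring)

lemma tendsto_gauss_cocompact :
    Tendsto (fun x : ℝ => -x * Real.exp (-x^2/2)) (cocompact ℝ) (𝓝 0) := by
  have hb := tendsto_rpow_abs_mul_exp_neg_mul_sq_cocompact (one_half_pos) (1:ℝ)
  apply squeeze_zero_norm _ hb
  intro x
  rw [Real.rpow_one, Real.norm_eq_abs, abs_mul, abs_neg]
  have h1 : -(1/2:ℝ)*x^2 = -x^2/2 := by ring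
  rw [h1, abs_of_nonneg (Real.exp_nonneg _)]

lemma integral_sq_exp_gauss : ∫ x : ℝ, x^2 * Real.exp (-x^2/2) = Real.sqrt (2*π) := by
  have hint : Integrable (fun x : ℝ => (x^2 - 1) * Real.exp (-x^2/2)) := by
    apply (integrable_sq_exp_gauss.sub integrable_exp_gauss).congr
    filter_upwards with x
    simp only [Pi.sub_apply]
    ring
  have hct := tendsto_gauss_cocompact
  have key : ∫ x : ℝ, (x^2 - 1) * Real.exp (-x^2/2) = 0 - 0 :=
    integral_of_hasDerivAt_of_tendsto hasDeriv_gauss hint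
      (hct.mono_left (by rw [cocompact_eq_atBot_atTop]; exact le_sup_left))
      (hct.mono_left (by rw [cocompact_eq_atBot_atTop]; exact le_sup_right))
  have hsub : ∫ x : ℝ, (x^2 - 1) * Real.exp (-x^2/2)
      = (∫ x : ℝ, x^2 * Real.exp (-x^2/2)) - ∫ x : ℝ, Real.exp (-x^2/2) := by
    rw [← integral_sub integrable_sq_exp_gauss integrable_exp_gauss]
    congr 1; funext x; ring
  rw [hsub] at key
  rw [integral_exp_gauss] at key
  linarith

lemma sqrt_two_pi_pos : 0 < Real.sqrt (2*π) := Real.sqrt_pos.mpr (by positivity)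

lemma nu_moment2 : ∫ x, x^2 ∂(gaussianReal 0 1) = 1 := by
  rw [integral_nu]
  have h : ∀ x : ℝ, gaussianPDFReal 0 1 x * x^2
      = (Real.sqrt (2*π))⁻¹ * (x^2 * Real.exp (-x^2/2)) := by
    intro x; rw [pdf_eq]; ring
  simp_rw [h]
  rw [integral_const_mul, integral_sq_exp_gauss, inv_mul_cancel₀ sqrt_two_pi_pos.ne']

lemma nu_int_sq : Integrable (fun x => x^2) (gaussianReal 0 1) := by
  rw [integrable_nu_iff]
  apply (integrable_sq_exp_gauss.const_mul ((Real.sqrt (2*π))⁻¹)).congr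
  filter_upwards with x
  rw [pdf_eq]; ring

lemma nu_map_neg :
    Measure.map (fun x : ℝ => -x) (gaussianReal 0 1) = gaussianReal 0 1 := by
  have h := gaussianReal_map_const_mul (μ := 0) (v := 1) (-1)
  have h1 : (fun x : ℝ => -x) = ((-1 : ℝ) * ·) := by funext x; simp
  have h2 : (⟨(-1:ℝ)^2, sq_nonneg _⟩ : NNReal) * 1 = 1 := by
    ext; norm_num
  rw [h1]
  rw [h] -- may need adjusting
  rw [mul_zero]
  congr 1


lemma nu_symm (g : ℝ → ℝ) (hg : Continuous g) :
    ∫ x, g (-x) ∂(gaussianReal 0 1) = ∫ x, g x ∂(gaussianReal 0 1) := by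
  conv_rhs => rw [← nu_map_neg]
  rw [integral_map measurable_neg.aemeasurable hg.aestronglyMeasurable]

lemma integrable_id_of_sq {m : Measure ℝ} [IsProbabilityMeasure m]
    (h2 : Integrable (fun v => v^2) m) : Integrable (fun v : ℝ => v) m := by
  apply Integrable.mono' (((integrable_const (1:ℝ)).add h2).div_const 2)
    aestronglyMeasurable_id
  filter_upwards with v
  simp only [Pi.add_apply, Pi.div_apply, id_eq]
  rw [Real.norm_eq_abs]
  nlinarith [sq_nonneg (|v|-1), sq_abs v, abs_nonneg v]

lemma nu_int_id : Integrable (fun v : ℝ => v) (gaussianReal 0 1) :=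
  integrable_id_of_sq nu_int_sq

lemma nu_moment1 : ∫ x, x ∂(gaussianReal 0 1) = 0 := by
  have h := nu_symm (fun x => x) continuous_id
  have h' := integral_neg (μ := gaussianReal 0 1) (f := fun x : ℝ => x)
  rw [h'] at h
  linarith

lemma maxsq (y : ℝ) : (max y 0)^2 = y^2 - (max (-y) 0)^2 := by
  rcases le_total y 0 with h|h
  · rw [max_eq_right h, max_eq_left (neg_nonneg.mpr h)]; ring
  · rw [max_eq_left h, max_eq_right (neg_nonpos.mpr h)]; ring

lemma nu_int_pos2 : Integrable (fun x => (max x 0)^2) (gaussianReal 0 1) := by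
  apply Integrable.mono' (f := fun x : ℝ => (max x 0)^2) nu_int_sq
    (((continuous_id.max continuous_const).pow 2).aestronglyMeasurable)
  filter_upwards with x
  rw [Real.norm_eq_abs, abs_of_nonneg (by positivity)]
  rcases le_total x 0 with h|h
  · rw [max_eq_right h]; simpa using sq_nonneg x
  · rw [max_eq_left h]

lemma nu_int_neg2 : Integrable (fun x => (max (-x) 0)^2) (gaussianReal 0 1) := by
  apply Integrable.mono' (f := fun x : ℝ => (max (-x) 0)^2) nu_int_sq
    (((continuous_id.neg.max continuous_const).pow 2).aestronglyMeasurable)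
  filter_upwards with x
  rw [Real.norm_eq_abs, abs_of_nonneg (by positivity)]
  rcases le_total (-x) 0 with h|h
  · rw [max_eq_right h]; simpa using sq_nonneg x
  · rw [max_eq_left h, neg_sq]

lemma nu_pos2 : ∫ x, (max x 0)^2 ∂(gaussianReal 0 1) = 1/2 := by
  have hsymm : ∫ x, (max (-x) 0)^2 ∂(gaussianReal 0 1)
      = ∫ x, (max x 0)^2 ∂(gaussianReal 0 1) :=
    nu_symm (fun x => (max x 0)^2) ((continuous_id.max continuous_const).pow 2)
  have hsum : ∫ x, ((max x 0)^2 + (max (-x) 0)^2) ∂(gaussianReal 0 1) = 1 := by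
    have : ∀ x : ℝ, (max x 0)^2 + (max (-x) 0)^2 = x^2 := by
      intro x; rw [maxsq]; ring
    simp_rw [this]
    exact nu_moment2
  rw [integral_add nu_int_pos2 nu_int_neg2] at hsum
  rw [hsymm] at hsum
  linarith

lemma nu_neg2 : ∫ x, (max (-x) 0)^2 ∂(gaussianReal 0 1) = 1/2 := by
  rw [nu_symm (fun x => (max x 0)^2) ((continuous_id.max continuous_const).pow 2)]
  exact nu_pos2

lemma nu_ggp_int : Integrable (fun x => x * max x 0) (gaussianReal 0 1) := by
  apply nu_int_pos2.congr
  filter_upwards with x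
  rcases le_total x 0 with h|h
  · rw [max_eq_right h]; ring
  · rw [max_eq_left h]; ring

lemma nu_ggp : ∫ x, x * max x 0 ∂(gaussianReal 0 1) = 1/2 := by
  rw [show (fun x : ℝ => x * max x 0) = fun x => (max x 0)^2 from ?_]
  · exact nu_pos2
  · funext x
    rcases le_total x 0 with h|h
    · rw [max_eq_right h]; ring
    · rw [max_eq_left h]; ring

lemma nu_int_abs : Integrable (fun x : ℝ => |x|) (gaussianReal 0 1) := nu_int_id.abs

lemma nu_abs_le_one : ∫ x, |x| ∂(gaussianReal 0 1) ≤ 1 := by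
  have hb : Integrable (fun x : ℝ => (1 + x^2)/2) (gaussianReal 0 1) :=
    ((integrable_const (1:ℝ)).add nu_int_sq).div_const 2
  have hm : ∫ x, |x| ∂(gaussianReal 0 1) ≤ ∫ x, (1 + x^2)/2 ∂(gaussianReal 0 1) := by
    apply integral_mono nu_int_abs hb
    intro v
    nlinarith [sq_nonneg (|v|-1), sq_abs v, abs_nonneg v]
  have hv : ∫ x, (1 + x^2)/2 ∂(gaussianReal 0 1) = 1 := by
    rw [integral_div, integral_add (integrable_const 1) nu_int_sq, nu_moment2]
    simp
  linarith

lemma nu_abs_nonneg : 0 ≤ ∫ x, |x| ∂(gaussianReal 0 1) :=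
  integral_nonneg (fun x => abs_nonneg x)


lemma P1 (a g : ℝ) (ha : 0 ≤ a) :
    |(max (a+g) 0)^2 - ((a+g)^2 - (max (-g) 0)^2)| ≤ 2*a*|g| := by
  have e1 : (max (a+g) 0)^2 - ((a+g)^2 - (max (-g) 0)^2)
      = (max (-g) 0)^2 - (max (-(a+g)) 0)^2 := by
    rw [maxsq (a+g)]; ring
  rw [e1]
  set n1 := max (-(a+g)) 0 with hn1
  set n2 := max (-g) 0 with hn2
  have h01 : 0 ≤ n1 := le_max_right _ _
  have h12 : n1 ≤ n2 := max_le_max (by linarith) le_rfl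
  have h2g : n2 ≤ |g| := max_le (neg_le_abs g) (abs_nonneg g)
  have h21 : n2 ≤ n1 + a := by
    apply max_le _ (by linarith)
    have : -(a+g) ≤ n1 := le_max_left _ _
    linarith
  have hmul : (n2 - n1) * (n2 + n1) ≤ a * (2*|g|) := by
    apply mul_le_mul (by linarith) (by linarith) (by linarith) ha
  rw [abs_of_nonneg (by nlinarith)]
  nlinarith

lemma P2 (a g : ℝ) (ha : 0 ≤ a) : |max (a+g) 0 - a| ≤ |g| := by
  rcases le_total (a+g) 0 with h|h
  · rw [max_eq_right h, abs_le]
    constructor <;> nlinarith [neg_abs_le g, le_abs_self g]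
  · rw [max_eq_left h, show a + g - a = g by ring]

lemma P3 (a g : ℝ) (ha : 0 ≤ a) : |max (a+g) 0 - max g 0| ≤ a := by
  rcases le_total (a+g) 0 with h|h <;> rcases le_total g 0 with h2|h2
  · rw [max_eq_right h, max_eq_right h2, abs_le]; constructor <;> linarith
  · rw [max_eq_right h, max_eq_left h2, abs_le]; constructor <;> linarith
  · rw [max_eq_left h, max_eq_right h2, abs_le]; constructor <;> linarith
  · rw [max_eq_left h, max_eq_left h2, abs_le]; constructor <;> linarith

lemma approx {α : Type*} [MeasurableSpace α] {m : Measure α} {f r s : α → ℝ}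
    (hf : AEStronglyMeasurable f m) (hr : Integrable r m) (hs : Integrable s m)
    (hb : ∀ᵐ p ∂m, |f p - r p| ≤ s p) :
    |(∫ p, f p ∂m) - ∫ p, r p ∂m| ≤ ∫ p, s p ∂m := by
  have hfi : Integrable f m := by
    apply Integrable.mono' (hr.abs.add hs) hf
    filter_upwards [hb] with p hp
    rw [Real.norm_eq_abs]
    have := abs_sub_abs_le_abs_sub (f p) (r p)
    simp only [Pi.add_apply]
    have : |r p| = |r p| := rfl
    calc |f p| ≤ |f p - r p| + |r p| := by
            have := abs_sub_abs_le_abs_sub (f p) (r p); linarith [abs_sub_comm (f p) (r p)]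
      _ ≤ |r p| + s p := by linarith
  rw [← integral_sub hfi hr]
  calc |∫ p, (f p - r p) ∂m| ≤ ∫ p, |f p - r p| ∂m := by
        simpa [Real.norm_eq_abs] using norm_integral_le_integral_norm (fun p => f p - r p) (μ := m)
    _ ≤ ∫ p, s p ∂m := integral_mono_ae (hfi.sub hr).abs hs hb


lemma int_fst {μ : Measure ℝ} [IsProbabilityMeasure μ] {f : ℝ → ℝ}
    (h : Integrable f μ) :
    Integrable (fun p : ℝ × ℝ => f p.1) (μ.prod (gaussianReal 0 1)) := by
  have := h.mul_prod (integrable_const (1:ℝ) (μ := gaussianReal 0 1))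
  simpa using this

lemma int_snd {μ : Measure ℝ} [IsProbabilityMeasure μ] {f : ℝ → ℝ}
    (h : Integrable f (gaussianReal 0 1)) :
    Integrable (fun p : ℝ × ℝ => f p.2) (μ.prod (gaussianReal 0 1)) := by
  have := (integrable_const (1:ℝ) (μ := μ)).mul_prod h
  simpa using this

lemma Efst {μ : Measure ℝ} [IsProbabilityMeasure μ] (f : ℝ → ℝ) :
    ∫ p : ℝ × ℝ, f p.1 ∂(μ.prod (gaussianReal 0 1)) = ∫ v, f v ∂μ := by
  rw [integral_fun_fst]
  simp

lemma Esnd {μ : Measure ℝ} [IsProbabilityMeasure μ] (f : ℝ → ℝ) :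
    ∫ p : ℝ × ℝ, f p.2 ∂(μ.prod (gaussianReal 0 1)) = ∫ g, f g ∂(gaussianReal 0 1) := by
  rw [integral_fun_snd]
  simp

lemma key (μ : Measure ℝ) (ε : ℝ) (hε : 0 < ε) (hl : lawSparse μ ε)
    (x K : ℝ) (hx0 : 0 ≤ x) (hxK : x ≤ K) :
    |Dfun μ x - (1/2 + x^2)| ≤ 2*K*Real.sqrt ε ∧
    |(∫ p : ℝ × ℝ, p.1 * max (x*p.1+p.2) 0 ∂(μ.prod (gaussianReal 0 1))) - x|
      ≤ Real.sqrt ε ∧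
    |(∫ p : ℝ × ℝ, p.2 * max (x*p.1+p.2) 0 ∂(μ.prod (gaussianReal 0 1))) - 1/2|
      ≤ K*Real.sqrt ε := by
  obtain ⟨⟨hprob, hpos, hm2⟩, hsparse⟩ := hl
  haveI := hprob
  set ν : Measure ℝ := gaussianReal 0 1 with hν
  set Q : Measure (ℝ × ℝ) := μ.prod ν with hQ
  -- μ-side facts
  have hμ2 : Integrable (fun v => v^2) μ := by
    by_contra hc
    rw [integral_undef hc] at hm2
    norm_num at hm2
  have hμ1 : Integrable (fun v : ℝ => v) μ := integrable_id_of_sq hμ2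
  have hβ0 : 0 ≤ ∫ v, v ∂μ := integral_nonneg_of_ae hpos
  have hs : 0 < Real.sqrt ε := Real.sqrt_pos.mpr hε
  -- the sparsity bound: ∫ v ∂μ ≤ √ε
  have hind_int : Integrable (Set.indicator {(0:ℝ)}ᶜ (fun _ => (1:ℝ))) μ :=
    (integrable_const (1:ℝ)).indicator (measurableSet_singleton (0:ℝ)).compl
  have hindval : ∫ v, Set.indicator {(0:ℝ)}ᶜ (fun _ => (1:ℝ)) v ∂μ
      = (μ {(0:ℝ)}ᶜ).toReal := by
    have := integral_indicator_one (μ := μ) (measurableSet_singleton (0:ℝ)).compl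
    simpa [Measure.real] using this
  have hcompl : (μ {(0:ℝ)}ᶜ).toReal ≤ ε := by
    have hadd := measure_add_measure_compl (μ := μ) (measurableSet_singleton (0:ℝ))
    rw [measure_univ] at hadd
    have := congrArg ENNReal.toReal hadd
    rw [ENNReal.toReal_add (measure_ne_top μ _) (measure_ne_top μ _)] at this
    simp only [ENNReal.toReal_one] at this
    linarith
  have hβ : ∫ v, v ∂μ ≤ Real.sqrt ε := by
    have hrhs_int : Integrable (fun v =>
        (Real.sqrt ε * v^2 + (Real.sqrt ε)⁻¹ * Set.indicator {(0:ℝ)}ᶜ (fun _ => (1:ℝ)) v)/2) μ :=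
      ((hμ2.const_mul _).add (hind_int.const_mul _)).div_const 2
    have hmono := integral_mono_ae hμ1 hrhs_int ?_
    · rw [integral_div, integral_add (hμ2.const_mul _) (hind_int.const_mul _),
        integral_const_mul, integral_const_mul, hm2, hindval] at hmono
      have heps : (Real.sqrt ε)⁻¹ * (μ {(0:ℝ)}ᶜ).toReal ≤ Real.sqrt ε := by
        have h2 : (Real.sqrt ε)⁻¹ * (μ {(0:ℝ)}ᶜ).toReal ≤ (Real.sqrt ε)⁻¹ * ε :=
          mul_le_mul_of_nonneg_left hcompl (by positivity)
        have h3 : (Real.sqrt ε)⁻¹ * ε = Real.sqrt ε := by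
          rw [← Real.mul_self_sqrt hε.le]; field_simp; rw [Real.sqrt_sq (Real.sqrt_nonneg _)]
        linarith
      have h1 : (Real.sqrt ε)⁻¹ * (μ {(0:ℝ)}ᶜ).toReal ≥ 0 := by
        apply mul_nonneg (by positivity) ENNReal.toReal_nonneg
      calc ∫ v, v ∂μ ≤ (Real.sqrt ε * 1 + (Real.sqrt ε)⁻¹ * (μ {(0:ℝ)}ᶜ).toReal)/2 := hmono
        _ ≤ (Real.sqrt ε + Real.sqrt ε)/2 := by
            apply div_le_div_of_nonneg_right ?_ (by norm_num)
            · linarith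
        _ = Real.sqrt ε := by ring
    · filter_upwards [hpos] with v hv
      by_cases hv0 : v = 0
      · subst hv0; simp
      · rw [Set.indicator_of_mem (by simp [hv0]) (fun _ => (1:ℝ))]
        rw [← sub_nonneg]
        have : (Real.sqrt ε * v^2 + (Real.sqrt ε)⁻¹ * 1)/2 - v
            = (Real.sqrt ε)⁻¹ * (Real.sqrt ε * v - 1)^2 / 2 := by
          field_simp
          ring
        rw [this]
        positivity
  -- ν facts
  have hν1 : Integrable (fun g : ℝ => g) ν := nu_int_id
  have hνabs : Integrable (fun g : ℝ => |g|) ν := nu_int_abs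
  -- product integrability
  have iv2 : Integrable (fun p : ℝ × ℝ => p.1^2) Q := int_fst hμ2
  have ig2 : Integrable (fun p : ℝ × ℝ => p.2^2) Q := int_snd nu_int_sq
  have ivg : Integrable (fun p : ℝ × ℝ => p.1 * p.2) Q := hμ1.mul_prod hν1
  have ivag : Integrable (fun p : ℝ × ℝ => p.1 * |p.2|) Q := hμ1.mul_prod hνabs
  have ineg2 : Integrable (fun p : ℝ × ℝ => (max (-p.2) 0)^2) Q := int_snd nu_int_neg2
  have iggp : Integrable (fun p : ℝ × ℝ => p.2 * max p.2 0) Q := int_snd nu_ggp_int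
  -- exact product integrals
  have Ev2 : ∫ p : ℝ × ℝ, p.1^2 ∂Q = 1 := by rw [hQ, hν, Efst (fun v => v^2)]; exact hm2
  have Eg2 : ∫ p : ℝ × ℝ, p.2^2 ∂Q = 1 := by rw [hQ, hν, Esnd (fun g => g^2)]; exact nu_moment2
  have Evg : ∫ p : ℝ × ℝ, p.1 * p.2 ∂Q = 0 := by
    rw [hQ, hν, integral_prod_mul (fun v : ℝ => v) (fun g : ℝ => g), nu_moment1, mul_zero]
  have Eneg : ∫ p : ℝ × ℝ, (max (-p.2) 0)^2 ∂Q = 1/2 := by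
    rw [hQ, hν, Esnd (fun g => (max (-g) 0)^2)]; exact nu_neg2
  have Eggp : ∫ p : ℝ × ℝ, p.2 * max p.2 0 ∂Q = 1/2 := by
    rw [hQ, hν, Esnd (fun g => g * max g 0)]; exact nu_ggp
  set η : ℝ := (∫ v, v ∂μ) * ∫ g, |g| ∂ν with hηdef
  have Evag : ∫ p : ℝ × ℝ, p.1 * |p.2| ∂Q = η := by
    rw [hQ, hν, integral_prod_mul (fun v : ℝ => v) (fun g : ℝ => |g|), hηdef, hν]
  have hη0 : 0 ≤ η := mul_nonneg hβ0 nu_abs_nonneg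
  have hη : η ≤ Real.sqrt ε := by
    calc η ≤ Real.sqrt ε * 1 := mul_le_mul hβ nu_abs_le_one nu_abs_nonneg hs.le
      _ = Real.sqrt ε := mul_one _
  -- a.e. nonnegativity of first coordinate
  have hQpos : ∀ᵐ p ∂Q, 0 ≤ p.1 := by
    have hfst : Q.map Prod.fst = μ := by
      rw [hQ, ← Measure.fst]
      exact Measure.fst_prod
    apply ae_of_ae_map (measurable_fst.aemeasurable)
    rw [hfst]
    exact hpos
  -- D estimate
  have hD : |Dfun μ x - (1/2 + x^2)| ≤ 2*x*η := by
    have hr_int : Integrable (fun p : ℝ × ℝ =>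
        x^2 * p.1^2 + (2*x) * (p.1*p.2) + p.2^2 - (max (-p.2) 0)^2) Q :=
      (((iv2.const_mul (x^2)).add (ivg.const_mul (2*x))).add ig2).sub ineg2
    have hs_int : Integrable (fun p : ℝ × ℝ => (2*x) * (p.1 * |p.2|)) Q :=
      ivag.const_mul (2*x)
    have hEr : ∫ p : ℝ × ℝ,
        (x^2 * p.1^2 + (2*x) * (p.1*p.2) + p.2^2 - (max (-p.2) 0)^2) ∂Q
        = x^2 + 1 - 1/2 := by
      have i1 : Integrable (fun p : ℝ × ℝ => x^2 * p.1^2) Q := iv2.const_mul (x^2)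
      have i2 : Integrable (fun p : ℝ × ℝ => (2*x) * (p.1*p.2)) Q := ivg.const_mul (2*x)
      have i12 : Integrable (fun p : ℝ × ℝ => x^2 * p.1^2 + (2*x) * (p.1*p.2)) Q := i1.add i2
      have i123 : Integrable (fun p : ℝ × ℝ =>
          x^2 * p.1^2 + (2*x) * (p.1*p.2) + p.2^2) Q := i12.add ig2
      rw [integral_sub i123 ineg2, integral_add i12 ig2, integral_add i1 i2,
        integral_const_mul, integral_const_mul, Ev2, Eg2, Evg, Eneg]
      ring
    have hEs : ∫ p : ℝ × ℝ, (2*x) * (p.1 * |p.2|) ∂Q = 2*x*η := by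
      rw [integral_const_mul, Evag]
    have happrox := approx
      (f := fun p : ℝ × ℝ => (max (x * p.1 + p.2) 0)^2)
      (((continuous_const.mul continuous_fst).add continuous_snd |>.max
        continuous_const |>.pow 2).aestronglyMeasurable)
      hr_int hs_int ?_
    · rw [hEr, hEs] at happrox
      rw [Dfun]
      rw [show x^2 + 1 - 1/2 = 1/2 + x^2 by ring] at happrox
      exact happrox
    · filter_upwards [hQpos] with p hp
      have ha : 0 ≤ x * p.1 := mul_nonneg hx0 hp
      have := P1 (x*p.1) p.2 ha
      calc |(max (x * p.1 + p.2) 0)^2 -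
            (x^2 * p.1^2 + (2*x) * (p.1*p.2) + p.2^2 - (max (-p.2) 0)^2)|
          = |(max (x*p.1 + p.2) 0)^2 - ((x*p.1 + p.2)^2 - (max (-p.2) 0)^2)| := by
            ring_nf
        _ ≤ 2*(x*p.1)*|p.2| := this
        _ = (2*x) * (p.1 * |p.2|) := by ring
  -- F numerator estimate
  have hF : |(∫ p : ℝ × ℝ, p.1 * max (x*p.1+p.2) 0 ∂Q) - x| ≤ η := by
    have hr_int : Integrable (fun p : ℝ × ℝ => x * p.1^2) Q := iv2.const_mul x
    have hEr : ∫ p : ℝ × ℝ, x * p.1^2 ∂Q = x := by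
      rw [integral_const_mul, Ev2, mul_one]
    have happrox := approx
      (f := fun p : ℝ × ℝ => p.1 * max (x*p.1+p.2) 0)
      ((continuous_fst.mul (((continuous_const.mul continuous_fst).add
        continuous_snd).max continuous_const)).aestronglyMeasurable)
      hr_int ivag ?_
    · rw [hEr, Evag] at happrox
      exact happrox
    · filter_upwards [hQpos] with p hp
      have ha : 0 ≤ x * p.1 := mul_nonneg hx0 hp
      have h2 := P2 (x*p.1) p.2 ha
      calc |p.1 * max (x*p.1+p.2) 0 - x * p.1^2|
          = p.1 * |max (x*p.1+p.2) 0 - x*p.1| := by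
            rw [show p.1 * max (x*p.1+p.2) 0 - x * p.1^2
              = p.1 * (max (x*p.1+p.2) 0 - x*p.1) by ring, abs_mul, abs_of_nonneg hp]
        _ ≤ p.1 * |p.2| := mul_le_mul_of_nonneg_left h2 hp
  -- G numerator estimate
  have hG : |(∫ p : ℝ × ℝ, p.2 * max (x*p.1+p.2) 0 ∂Q) - 1/2| ≤ x*η := by
    have hEs : ∫ p : ℝ × ℝ, x * (p.1 * |p.2|) ∂Q = x*η := by
      rw [integral_const_mul, Evag]
    have happrox := approx
      (f := fun p : ℝ × ℝ => p.2 * max (x*p.1+p.2) 0)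
      ((continuous_snd.mul (((continuous_const.mul continuous_fst).add
        continuous_snd).max continuous_const)).aestronglyMeasurable)
      iggp (ivag.const_mul x) ?_
    · rw [Eggp, hEs] at happrox
      exact happrox
    · filter_upwards [hQpos] with p hp
      have ha : 0 ≤ x * p.1 := mul_nonneg hx0 hp
      have h3 := P3 (x*p.1) p.2 ha
      calc |p.2 * max (x*p.1+p.2) 0 - p.2 * max p.2 0|
          = |p.2| * |max (x*p.1+p.2) 0 - max p.2 0| := by
            rw [show p.2 * max (x*p.1+p.2) 0 - p.2 * max p.2 0
              = p.2 * (max (x*p.1+p.2) 0 - max p.2 0) by ring, abs_mul]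
        _ ≤ |p.2| * (x*p.1) := mul_le_mul_of_nonneg_left h3 (abs_nonneg _)
        _ = x * (p.1 * |p.2|) := by ring
  have hxη : x*η ≤ K*Real.sqrt ε := by
    apply mul_le_mul hxK hη hη0 (le_trans hx0 hxK)
  refine ⟨?_, ?_, ?_⟩
  · calc |Dfun μ x - (1/2 + x^2)| ≤ 2*x*η := hD
      _ = 2*(x*η) := by ring
      _ ≤ 2*(K*Real.sqrt ε) := by linarith
      _ = 2*K*Real.sqrt ε := by ring
  · exact le_trans hF hη
  · exact le_trans hG hxη


lemma ratio_bound (N a D T e f A : ℝ) (hD0 : 0 ≤ D) (hT0 : 0 ≤ T)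
    (hDs : 1/2 ≤ Real.sqrt D) (hTs : 1/2 ≤ Real.sqrt T)
    (hDT : |D - T| ≤ e) (hN : |N - a| ≤ f) (ha : |a| ≤ A) :
    |N/Real.sqrt D - a/Real.sqrt T| ≤ 2*f + 4*A*e := by
  set sd := Real.sqrt D with hsd
  set st := Real.sqrt T with hst
  have hsd0 : 0 < sd := lt_of_lt_of_le (by norm_num) hDs
  have hst0 : 0 < st := lt_of_lt_of_le (by norm_num) hTs
  have hsd2 : sd^2 = D := Real.sq_sqrt hD0
  have hst2 : st^2 = T := Real.sq_sqrt hT0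
  have hf0 : 0 ≤ f := le_trans (abs_nonneg _) hN
  have he0 : 0 ≤ e := le_trans (abs_nonneg _) hDT
  have hA0 : 0 ≤ A := le_trans (abs_nonneg _) ha
  have h1 : |N/sd - a/sd| ≤ 2*f := by
    rw [div_sub_div_same, abs_div, abs_of_pos hsd0, div_le_iff₀ hsd0]
    nlinarith
  have hstsd : |st - sd| ≤ e := by
    have hmul : (st - sd) * (st + sd) = T - D := by nlinarith
    have habs : |st - sd| * (st + sd) = |T - D| := by
      rw [← abs_of_nonneg (show (0:ℝ) ≤ st + sd by linarith), ← abs_mul, hmul]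
    have hTD : |T - D| ≤ e := by rw [abs_sub_comm]; exact hDT
    nlinarith [abs_nonneg (st - sd)]
  have hprod : (1:ℝ)/4 ≤ sd*st := by nlinarith
  have h2 : |a/sd - a/st| ≤ 4*A*e := by
    have heq : a/sd - a/st = a * (st - sd) / (sd * st) := by
      field_simp
    rw [heq, abs_div, abs_mul, abs_of_pos (mul_pos hsd0 hst0),
      div_le_iff₀ (mul_pos hsd0 hst0)]
    have hnum : |a| * |st - sd| ≤ A * e := mul_le_mul ha hstsd (abs_nonneg _) hA0
    have h4 : 4*A*e*(1/4) ≤ 4*A*e*(sd*st) :=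
      mul_le_mul_of_nonneg_left hprod (by positivity)
    linarith
  calc |N/sd - a/st| ≤ |N/sd - a/sd| + |a/sd - a/st| := abs_sub_le _ _ _
    _ ≤ 2*f + 4*A*e := by linarith

end FGDaux

set_option maxHeartbeats 1000000 in
theorem FGD_uniform_limits_sparse (M δ : ℝ) (hδ : 0 < δ) :
    ∃ ε₀ : ℝ, 0 < ε₀ ∧
      ∀ ε : ℝ, 0 < ε → ε ≤ ε₀ →
        ∀ μ : Measure ℝ, lawSparse μ ε →
          ∀ x : ℝ, x ∈ Set.Icc (0 : ℝ) M →
            |Dfun μ x - (1 / 2 + x ^ 2)| ≤ δ ∧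
            |Ffun μ x - x / Real.sqrt (1 / 2 + x ^ 2)| ≤ δ ∧
            |Gfun μ x - (1 / 2) / Real.sqrt (1 / 2 + x ^ 2)| ≤ δ := by
  set K : ℝ := |M| + 1 with hK
  have hK1 : 1 ≤ K := by
    have := abs_nonneg M
    rw [hK]; linarith
  have hK0 : 0 < K := by linarith
  refine ⟨min ((δ/(10*K^2))^2) ((1/(8*K))^2), by positivity, ?_⟩
  intro ε hε hεle μ hμ x hx
  obtain ⟨hx0, hxM⟩ := hx
  have hxK : x ≤ K := by
    have := le_abs_self M
    rw [hK]; linarith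
  obtain ⟨hD, hF, hG⟩ := FGDaux.key μ ε hε hμ x K hx0 hxK
  set s : ℝ := Real.sqrt ε with hsdef
  have hs0 : 0 ≤ s := Real.sqrt_nonneg _
  have hs1 : s ≤ δ/(10*K^2) := by
    have h := le_trans hεle (min_le_left _ _)
    calc s ≤ Real.sqrt ((δ/(10*K^2))^2) := Real.sqrt_le_sqrt h
      _ = δ/(10*K^2) := Real.sqrt_sq (by positivity)
  have hs2 : s ≤ 1/(8*K) := by
    have h := le_trans hεle (min_le_right _ _)
    calc s ≤ Real.sqrt ((1/(8*K))^2) := Real.sqrt_le_sqrt h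
      _ = 1/(8*K) := Real.sqrt_sq (by positivity)
  have hT12 : (1:ℝ)/2 ≤ 1/2 + x^2 := by nlinarith
  have hT0 : (0:ℝ) ≤ 1/2 + x^2 := by linarith
  have hTs : (1:ℝ)/2 ≤ Real.sqrt (1/2 + x^2) := by
    nlinarith [Real.sq_sqrt hT0, Real.sqrt_nonneg (1/2 + x^2)]
  have hKe : 2*K*s ≤ 1/4 := by
    have h := mul_le_mul_of_nonneg_left hs2 (show (0:ℝ) ≤ 2*K by linarith)
    have h2 : 2*K*(1/(8*K)) = 1/4 := by field_simp; ring
    linarith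
  have hDe : |Dfun μ x - (1/2 + x^2)| ≤ 1/4 := le_trans hD hKe
  obtain ⟨hDe1, hDe2⟩ := abs_le.mp hDe
  have hD14 : (1:ℝ)/4 ≤ Dfun μ x := by linarith
  have hD0 : (0:ℝ) ≤ Dfun μ x := by linarith
  have hDs : (1:ℝ)/2 ≤ Real.sqrt (Dfun μ x) := by
    nlinarith [Real.sq_sqrt hD0, Real.sqrt_nonneg (Dfun μ x)]
  have h10K : 10*K^2*s ≤ δ := by
    have := (le_div_iff₀ (show (0:ℝ) < 10*K^2 by positivity)).mp hs1
    linarith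
  refine ⟨?_, ?_, ?_⟩
  · have hcoef : (0:ℝ) ≤ (10*K^2 - 2*K) * s :=
      mul_nonneg (by nlinarith [hK1, sq_nonneg (K-1)]) hs0
    calc |Dfun μ x - (1/2 + x^2)| ≤ 2*K*s := hD
      _ ≤ 10*K^2*s := by linarith
      _ ≤ δ := h10K
  · have hr := FGDaux.ratio_bound _ x (Dfun μ x) (1/2 + x^2) (2*K*s) s K
      hD0 hT0 hDs hTs hD hF (by rw [abs_of_nonneg hx0]; exact hxK)
    have : Ffun μ x = (∫ p : ℝ × ℝ, p.1 * max (x*p.1+p.2) 0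
        ∂(μ.prod (ProbabilityTheory.gaussianReal 0 1))) / Real.sqrt (Dfun μ x) := rfl
    rw [this]
    have hcoef : (0:ℝ) ≤ 2*(K^2 - 1) * s :=
      mul_nonneg (by nlinarith [hK1, sq_nonneg (K-1)]) hs0
    calc _ ≤ 2*s + 4*K*(2*K*s) := hr
      _ ≤ 10*K^2*s := by linarith
      _ ≤ δ := h10K
  · have ha : |(1:ℝ)/2| ≤ K := by
      rw [abs_of_nonneg (by norm_num : (0:ℝ) ≤ 1/2)]
      linarith
    have hr := FGDaux.ratio_bound _ (1/2) (Dfun μ x) (1/2 + x^2) (2*K*s) (K*s) K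
      hD0 hT0 hDs hTs hD hG ha
    have : Gfun μ x = (∫ p : ℝ × ℝ, p.2 * max (x*p.1+p.2) 0
        ∂(μ.prod (ProbabilityTheory.gaussianReal 0 1))) / Real.sqrt (Dfun μ x) := rfl
    rw [this]
    have hcoef : (0:ℝ) ≤ (2*K^2 - 2*K) * s :=
      mul_nonneg (by nlinarith [hK1, sq_nonneg (K-1)]) hs0
    calc _ ≤ 2*(K*s) + 4*K*(2*K*s) := hr
      _ ≤ 10*K^2*s := by linarith
      _ ≤ δ := h10K
end

section
/- For any given a, b ∈ ℝ, the equation φ(v)/v + b Φ(v) = a in the unknown v ∈ (0,∞) has at most two solutions; that is, the set {v > 0 : φ(v)/v + b Φ(v) = a} has cardinality at most 2. -/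
open MeasureTheory ProbabilityTheory Filter Topology

/-- The standard Gaussian density `φ(x) = e^{-x²/2}/√(2π)`. -/
noncomputable def gaussPhi (x : ℝ) : ℝ := Real.exp (-x ^ 2 / 2) / Real.sqrt (2 * Real.pi)

/-- The standard Gaussian distribution function `Φ(x) = ∫_{-∞}^x φ`. -/
noncomputable def gaussCdf (x : ℝ) : ℝ := ((gaussianReal 0 1) (Set.Iic x)).toReal

lemma gaussPhi_eq : gaussPhi = gaussianPDFReal 0 1 := by
  ext x
  simp [gaussPhi, gaussianPDFReal, div_eq_inv_mul, mul_comm]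

lemma gaussPhi_pos (x : ℝ) : 0 < gaussPhi x := by
  rw [gaussPhi_eq]; exact gaussianPDFReal_pos 0 1 x one_ne_zero

lemma continuous_gaussPhi : Continuous gaussPhi := by
  unfold gaussPhi
  fun_prop

lemma integrable_gaussPhi : MeasureTheory.Integrable gaussPhi := by
  rw [gaussPhi_eq]; exact integrable_gaussianPDFReal 0 1

lemma gaussCdf_eq (x : ℝ) : gaussCdf x = ∫ t in Set.Iic x, gaussPhi t := by
  rw [gaussCdf, gaussianReal_apply_eq_integral 0 one_ne_zero, ENNReal.toReal_ofReal, gaussPhi_eq]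
  exact MeasureTheory.setIntegral_nonneg measurableSet_Iic
    (fun t _ => (gaussianPDFReal_pos 0 1 t one_ne_zero).le)

lemma hasDerivAt_gaussCdf (v : ℝ) : HasDerivAt gaussCdf (gaussPhi v) v := by
  have key : ∀ x : ℝ, gaussCdf x = gaussCdf 0 + ∫ t in (0:ℝ)..x, gaussPhi t := by
    intro x
    rw [gaussCdf_eq, gaussCdf_eq]
    rw [← intervalIntegral.integral_Iic_sub_Iic integrable_gaussPhi.integrableOn
      integrable_gaussPhi.integrableOn]
    ring
  have h : HasDerivAt (fun x => gaussCdf 0 + ∫ t in (0:ℝ)..x, gaussPhi t) (gaussPhi v) v := by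
    refine HasDerivAt.const_add _ ?_
    exact intervalIntegral.integral_hasDerivAt_right
      (integrable_gaussPhi.intervalIntegrable)
      (continuous_gaussPhi.stronglyMeasurableAtFilter _ _)
      continuous_gaussPhi.continuousAt
  exact h.congr_of_eventuallyEq (Filter.Eventually.of_forall fun x => key x)

lemma hasDerivAt_gaussPhi (v : ℝ) : HasDerivAt gaussPhi (-v * gaussPhi v) v := by
  unfold gaussPhi
  have h1 : HasDerivAt (fun x : ℝ => -x ^ 2 / 2) (-v) v := by
    have := ((hasDerivAt_pow 2 v).neg).div_const 2
    refine this.congr_deriv ?_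
    ring
  have h2 : HasDerivAt (fun x : ℝ => Real.exp (-x ^ 2 / 2))
      (Real.exp (-v ^ 2 / 2) * (-v)) v := h1.exp
  have := h2.div_const (Real.sqrt (2 * Real.pi))
  refine this.congr_deriv ?_
  ring

/-- Derivative of the main function on `(0, ∞)`. -/
lemma hasDerivAt_f (b : ℝ) {v : ℝ} (hv : 0 < v) :
    HasDerivAt (fun x => gaussPhi x / x + b * gaussCdf x)
      (gaussPhi v * (b - 1 - 1 / v ^ 2)) v := by
  have h1 : HasDerivAt (fun x => gaussPhi x / x)
      ((-v * gaussPhi v * v - gaussPhi v * 1) / v ^ 2) v :=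
    (hasDerivAt_gaussPhi v).div (hasDerivAt_id v) hv.ne'
  have h2 : HasDerivAt (fun x => b * gaussCdf x) (b * gaussPhi v) v :=
    (hasDerivAt_gaussCdf v).const_mul b
  have := h1.add h2
  refine this.congr_deriv ?_
  field_simp
  ring

lemma subsingleton_sol {s : Set ℝ} {g : ℝ → ℝ} {a : ℝ} (hs : Set.InjOn g s) :
    Set.Subsingleton {v ∈ s | g v = a} := by
  intro x hx y hy
  exact hs hx.1 hy.1 (hx.2.trans hy.2.symm)

lemma two_of_subsingletons {S A B : Set ℝ} (hA : A.Subsingleton) (hB : B.Subsingleton)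
    (h : S ⊆ A ∪ B) : ∃ v₁ v₂ : ℝ, S ⊆ {v₁, v₂} := by
  by_cases hAn : A.Nonempty
  · obtain ⟨x, hx⟩ := hAn
    by_cases hBn : B.Nonempty
    · obtain ⟨y, hy⟩ := hBn
      refine ⟨x, y, fun z hz => ?_⟩
      rcases h hz with h' | h'
      · exact Or.inl (hA h' hx)
      · exact Or.inr (hB h' hy)
    · refine ⟨x, x, fun z hz => ?_⟩
      rcases h hz with h' | h'
      · exact Or.inl (hA h' hx)
      · exact absurd ⟨z, h'⟩ hBn
  · by_cases hBn : B.Nonempty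
    · obtain ⟨y, hy⟩ := hBn
      refine ⟨y, y, fun z hz => ?_⟩
      rcases h hz with h' | h'
      · exact absurd ⟨z, h'⟩ hAn
      · exact Or.inl (hB h' hy)
    · exact ⟨0, 0, fun z hz => (h hz).elim (fun h' => absurd ⟨z, h'⟩ hAn)
        (fun h' => absurd ⟨z, h'⟩ hBn)⟩

/-- For any `a b : ℝ`, the equation `φ(v)/v + b Φ(v) = a` has at most two
solutions `v ∈ (0,∞)`. -/
theorem at_most_two_solutions (a b : ℝ) :
    ∃ v₁ v₂ : ℝ,
      {v : ℝ | 0 < v ∧ gaussPhi v / v + b * gaussCdf v = a} ⊆ {v₁, v₂} := by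
  set f : ℝ → ℝ := fun x => gaussPhi x / x + b * gaussCdf x with hf
  have hcont : ∀ s : Set ℝ, s ⊆ Set.Ioi 0 → ContinuousOn f s := by
    intro s hs x hx
    exact ((hasDerivAt_f b (hs hx)).differentiableAt.continuousAt).continuousWithinAt
  by_cases hb : b ≤ 1
  · -- f strictly decreasing on (0, ∞)
    have hanti : StrictAntiOn f (Set.Ioi 0) := by
      refine strictAntiOn_of_deriv_neg (convex_Ioi 0) (hcont _ subset_rfl) ?_
      intro x hx
      rw [interior_Ioi] at hx
      have hx' : (0:ℝ) < x := hx
      rw [(hasDerivAt_f b hx).deriv]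
      have hx2 : 0 < 1 / x ^ 2 := by positivity
      have : b - 1 - 1 / x ^ 2 < 0 := by linarith
      exact mul_neg_of_pos_of_neg (gaussPhi_pos x) this
    have hsub : Set.Subsingleton {v ∈ Set.Ioi 0 | f v = a} :=
      subsingleton_sol hanti.injOn
    have : {v : ℝ | 0 < v ∧ f v = a} ⊆ {v ∈ Set.Ioi 0 | f v = a} ∪ ∅ := by
      intro v hv; exact Or.inl ⟨hv.1, hv.2⟩
    exact two_of_subsingletons hsub Set.subsingleton_empty this
  · push_neg at hb
    set c : ℝ := Real.sqrt (1 / (b - 1)) with hc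
    have hb1 : 0 < b - 1 := by linarith
    have hcpos : 0 < c := Real.sqrt_pos.mpr (by positivity)
    have hcsq : c ^ 2 = 1 / (b - 1) := Real.sq_sqrt (by positivity)
    have hanti : StrictAntiOn f (Set.Ioc 0 c) := by
      refine strictAntiOn_of_deriv_neg (convex_Ioc 0 c) (hcont _ Set.Ioc_subset_Ioi_self) ?_
      intro x hx
      rw [interior_Ioc] at hx
      rw [(hasDerivAt_f b hx.1).deriv]
      have hx' : (0:ℝ) < x := hx.1
      have hxc : x ^ 2 < c ^ 2 := by nlinarith [hx.1, hx.2]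
      have : b - 1 - 1 / x ^ 2 < 0 := by
        rw [hcsq] at hxc
        have h1 : (b - 1) * x ^ 2 < 1 := by
          have := mul_lt_mul_of_pos_left hxc hb1
          rwa [mul_one_div, div_self hb1.ne'] at this
        have h2 : b - 1 < 1 / x ^ 2 := by
          rw [lt_div_iff₀ (by positivity : (0:ℝ) < x ^ 2)]; linarith
        linarith
      exact mul_neg_of_pos_of_neg (gaussPhi_pos x) this
    have hmono : StrictMonoOn f (Set.Ici c) := by
      refine strictMonoOn_of_deriv_pos (convex_Ici c) (hcont _ ?_) ?_
      · exact fun x hx => lt_of_lt_of_le hcpos hx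
      · intro x hx
        rw [interior_Ici] at hx
        have hxpos : 0 < x := hcpos.trans hx
        rw [(hasDerivAt_f b hxpos).deriv]
        have hcx : c < x := hx
        have hxc : c ^ 2 < x ^ 2 := by nlinarith
        have : 0 < b - 1 - 1 / x ^ 2 := by
          rw [hcsq] at hxc
          have h1 : 1 < (b - 1) * x ^ 2 := by
            rw [div_lt_iff₀ hb1] at hxc; linarith [hxc]
          have h2 : 1 / x ^ 2 < b - 1 := by
            rw [div_lt_iff₀ (by positivity : (0:ℝ) < x ^ 2)]; linarith
          linarith
        exact mul_pos (gaussPhi_pos x) this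
    have hA : Set.Subsingleton {v ∈ Set.Ioc 0 c | f v = a} := subsingleton_sol hanti.injOn
    have hB : Set.Subsingleton {v ∈ Set.Ici c | f v = a} := subsingleton_sol hmono.injOn
    have hsub : {v : ℝ | 0 < v ∧ f v = a} ⊆
        {v ∈ Set.Ioc 0 c | f v = a} ∪ {v ∈ Set.Ici c | f v = a} := by
      intro v hv
      rcases le_or_gt v c with h | h
      · exact Or.inl ⟨⟨hv.1, h⟩, hv.2⟩
      · exact Or.inr ⟨h.le, hv.2⟩
    exact two_of_subsingletons hA hB hsub
end
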